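/- Assume the reduced spherically symmetric vacuum system (i)–(iv) holds on I. Then the function r ↦ (E(r)ρ(r)²/(r·B(r)²))·(A(r)²/(r²E(r)²) − 1) is constant on I. -/

import Mathlib

open Real Filter Topology Set

/-- The reduced spherically symmetric vacuum system (i)–(iv) on the open interval `(a,b) ⊆ (0,∞)`,
for positive differentiable `A, B, E, ρ` with constants `c₀`, `c_e > 0` and `r²E² ≠ A²`. -/
def ReducedVacuumSystem (a b : ℝ) (A B E ρ : ℝ → ℝ) (c₀ c_e : ℝ) : Prop :=
  0 ≤ a ∧ 0 < c_e ∧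
  (∀ r ∈ Set.Ioo a b, DifferentiableAt ℝ A r) ∧
  (∀ r ∈ Set.Ioo a b, DifferentiableAt ℝ B r) ∧
  (∀ r ∈ Set.Ioo a b, DifferentiableAt ℝ E r) ∧
  (∀ r ∈ Set.Ioo a b, DifferentiableAt ℝ ρ r) ∧
  (∀ r ∈ Set.Ioo a b, 0 < A r) ∧
  (∀ r ∈ Set.Ioo a b, 0 < B r) ∧
  (∀ r ∈ Set.Ioo a b, 0 < E r) ∧
  (∀ r ∈ Set.Ioo a b, 0 < ρ r) ∧
  (∀ r ∈ Set.Ioo a b, r ^ 2 * E r ^ 2 ≠ A r ^ 2) ∧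
  -- (i)  A'/A = c₀ r B E
  (∀ r ∈ Set.Ioo a b, deriv A r / A r = c₀ * r * B r * E r) ∧
  -- (ii) (rE)'/(rE) = −(2/c_e) r² B² E ρ² + c₀ r B E
  (∀ r ∈ Set.Ioo a b, deriv (fun s => s * E s) r / (r * E r)
      = -(2 / c_e) * r ^ 2 * B r ^ 2 * E r * ρ r ^ 2 + c₀ * r * B r * E r) ∧
  -- (iii) (rB)'/(rB) = −(1/r)·A²/(r²E² − A²)
  (∀ r ∈ Set.Ioo a b, deriv (fun s => s * B s) r / (r * B r)
      = -(1 / r) * A r ^ 2 / (r ^ 2 * E r ^ 2 - A r ^ 2)) ∧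
  -- (iv) ρ'/ρ = −(A²/(r²E² − A²))·(1/r − (2/c_e) r² B² E ρ²) − (1/2)·(rE)'/(rE)
  (∀ r ∈ Set.Ioo a b, deriv ρ r / ρ r
      = -(A r ^ 2 / (r ^ 2 * E r ^ 2 - A r ^ 2))
          * (1 / r - (2 / c_e) * r ^ 2 * B r ^ 2 * E r * ρ r ^ 2)
        - (1 / 2) * (deriv (fun s => s * E s) r / (r * E r)))

private lemma first_integral_c1_deriv_zero (a b : ℝ) (A B E ρ : ℝ → ℝ) (c₀ c_e : ℝ)
    (ha : 0 ≤ a) (hce : 0 < c_e)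
    (hA : ∀ r ∈ Set.Ioo a b, DifferentiableAt ℝ A r)
    (hB : ∀ r ∈ Set.Ioo a b, DifferentiableAt ℝ B r)
    (hE : ∀ r ∈ Set.Ioo a b, DifferentiableAt ℝ E r)
    (hρ : ∀ r ∈ Set.Ioo a b, DifferentiableAt ℝ ρ r)
    (hAp : ∀ r ∈ Set.Ioo a b, 0 < A r)
    (hBp : ∀ r ∈ Set.Ioo a b, 0 < B r)
    (hEp : ∀ r ∈ Set.Ioo a b, 0 < E r)
    (hρp : ∀ r ∈ Set.Ioo a b, 0 < ρ r)
    (hne : ∀ r ∈ Set.Ioo a b, r ^ 2 * E r ^ 2 ≠ A r ^ 2)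
    (hi : ∀ r ∈ Set.Ioo a b, deriv A r / A r = c₀ * r * B r * E r)
    (hii : ∀ r ∈ Set.Ioo a b, deriv (fun s => s * E s) r / (r * E r)
      = -(2 / c_e) * r ^ 2 * B r ^ 2 * E r * ρ r ^ 2 + c₀ * r * B r * E r)
    (hiii : ∀ r ∈ Set.Ioo a b, deriv (fun s => s * B s) r / (r * B r)
      = -(1 / r) * A r ^ 2 / (r ^ 2 * E r ^ 2 - A r ^ 2))
    (hiv : ∀ r ∈ Set.Ioo a b, deriv ρ r / ρ r
      = -(A r ^ 2 / (r ^ 2 * E r ^ 2 - A r ^ 2))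
          * (1 / r - (2 / c_e) * r ^ 2 * B r ^ 2 * E r * ρ r ^ 2)
        - (1 / 2) * (deriv (fun s => s * E s) r / (r * E r)))
    (r : ℝ) (hr : r ∈ Set.Ioo a b) :
    HasDerivAt (fun x => E x * ρ x ^ 2 / (x * B x ^ 2) * (A x ^ 2 / (x ^ 2 * E x ^ 2) - 1)) 0 r := by
  have hr0 : 0 < r := lt_of_le_of_lt ha hr.1
  have hr0' : r ≠ 0 := hr0.ne'
  have hA0 : A r ≠ 0 := (hAp r hr).ne'
  have hB0 : B r ≠ 0 := (hBp r hr).ne'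
  have hE0 : E r ≠ 0 := (hEp r hr).ne'
  have hρ0 : ρ r ≠ 0 := (hρp r hr).ne'
  have hce0 : c_e ≠ 0 := hce.ne'
  have hD0 : r ^ 2 * E r ^ 2 - A r ^ 2 ≠ 0 := sub_ne_zero.mpr (hne r hr)
  have hAd : HasDerivAt A (deriv A r) r := (hA r hr).hasDerivAt
  have hBd : HasDerivAt B (deriv B r) r := (hB r hr).hasDerivAt
  have hEd : HasDerivAt E (deriv E r) r := (hE r hr).hasDerivAt
  have hρd : HasDerivAt ρ (deriv ρ r) r := (hρ r hr).hasDerivAt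
  have hME : HasDerivAt (fun s => s * E s) (1 * E r + r * deriv E r) r :=
    (hasDerivAt_id r).mul hEd
  have hMB : HasDerivAt (fun s => s * B s) (1 * B r + r * deriv B r) r :=
    (hasDerivAt_id r).mul hBd
  -- explicit derivative formulas
  have hA' : deriv A r = c₀ * r * B r * E r * A r := by
    have h := hi r hr; rw [div_eq_iff hA0] at h; exact h
  have hiiR := hii r hr
  have hE' : deriv E r =
      ((-(2 / c_e) * r ^ 2 * B r ^ 2 * E r * ρ r ^ 2 + c₀ * r * B r * E r) * (r * E r) - E r) / r := by
    have h := hiiR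
    rw [hME.deriv, div_eq_iff (mul_ne_zero hr0' hE0)] at h
    rw [eq_div_iff hr0']
    linear_combination h
  have hB' : deriv B r =
      ((-(1 / r) * A r ^ 2 / (r ^ 2 * E r ^ 2 - A r ^ 2)) * (r * B r) - B r) / r := by
    have h := hiii r hr
    rw [hMB.deriv, div_eq_iff (mul_ne_zero hr0' hB0)] at h
    rw [eq_div_iff hr0']
    linear_combination h
  have hρ' : deriv ρ r =
      (-(A r ^ 2 / (r ^ 2 * E r ^ 2 - A r ^ 2))
          * (1 / r - (2 / c_e) * r ^ 2 * B r ^ 2 * E r * ρ r ^ 2)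
        - (1 / 2) * (-(2 / c_e) * r ^ 2 * B r ^ 2 * E r * ρ r ^ 2 + c₀ * r * B r * E r)) * ρ r := by
    have h := hiv r hr
    rw [hiiR, div_eq_iff hρ0] at h
    exact h
  -- build the derivative of the full function
  have h1 : HasDerivAt (fun x => E x * ρ x ^ 2)
      (deriv E r * ρ r ^ 2 + E r * (2 * ρ r ^ 1 * deriv ρ r)) r := hEd.mul (hρd.pow 2)
  have h2 : HasDerivAt (fun x => x * B x ^ 2)
      (1 * B r ^ 2 + r * (2 * B r ^ 1 * deriv B r)) r := (hasDerivAt_id r).mul (hBd.pow 2)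
  have hden1 : r * B r ^ 2 ≠ 0 := mul_ne_zero hr0' (pow_ne_zero 2 hB0)
  have h3 := h1.div h2 hden1
  have h4 : HasDerivAt (fun x => A x ^ 2) (2 * A r ^ 1 * deriv A r) r := hAd.pow 2
  have h5 : HasDerivAt (fun x => x ^ 2 * E x ^ 2)
      ((2 : ℕ) * r ^ 1 * E r ^ 2 + r ^ 2 * (2 * E r ^ 1 * deriv E r)) r := by
    have h : HasDerivAt (fun x => x ^ 2 * E x ^ 2) _ r := (hasDerivAt_pow 2 r).mul (hEd.pow 2)
    simpa using h
  have hden2 : r ^ 2 * E r ^ 2 ≠ 0 := mul_ne_zero (pow_ne_zero 2 hr0') (pow_ne_zero 2 hE0)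
  have h6 := (h4.div h5 hden2).sub_const 1
  have hF : HasDerivAt (fun x => E x * ρ x ^ 2 / (x * B x ^ 2) * (A x ^ 2 / (x ^ 2 * E x ^ 2) - 1)) _ r :=
    h3.mul h6
  convert hF using 1
  rw [hA', hB', hE', hρ']
  simp only [Pi.div_apply]
  field_simp
  ring


/-- If the reduced spherically symmetric vacuum system (i)–(iv) holds on
`I = (a,b)`, then `r ↦ (Eρ²/(rB²))·(A²/(r²E²) − 1)` is constant on `I`. -/
theorem first_integral_c1
    (a b : ℝ) (A B E ρ : ℝ → ℝ) (c₀ c_e : ℝ)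
    (hsys : ReducedVacuumSystem a b A B E ρ c₀ c_e) :
    ∃ c : ℝ, ∀ r ∈ Set.Ioo a b,
      E r * ρ r ^ 2 / (r * B r ^ 2) * (A r ^ 2 / (r ^ 2 * E r ^ 2) - 1) = c := by
  obtain ⟨ha, hce, hA, hB, hE, hρ, hAp, hBp, hEp, hρp, hne, hi, hii, hiii, hiv⟩ := hsys
  have key : ∀ r ∈ Set.Ioo a b,
      HasDerivAt (fun x => E x * ρ x ^ 2 / (x * B x ^ 2) * (A x ^ 2 / (x ^ 2 * E x ^ 2) - 1)) 0 r :=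
    fun r hr => first_integral_c1_deriv_zero a b A B E ρ c₀ c_e ha hce hA hB hE hρ hAp hBp hEp hρp
      hne hi hii hiii hiv r hr
  rcases Set.eq_empty_or_nonempty (Set.Ioo a b) with hIoo | ⟨x₀, hx₀⟩
  · exact ⟨0, fun r hr => absurd hr (by simp [hIoo])⟩
  · refine ⟨E x₀ * ρ x₀ ^ 2 / (x₀ * B x₀ ^ 2) * (A x₀ ^ 2 / (x₀ ^ 2 * E x₀ ^ 2) - 1),
      fun r hr => ?_⟩
    have := Convex.norm_image_sub_le_of_norm_hasDerivWithin_le (C := 0)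
      (f := fun x => E x * ρ x ^ 2 / (x * B x ^ 2) * (A x ^ 2 / (x ^ 2 * E x ^ 2) - 1))
      (f' := fun _ => (0 : ℝ)) (s := Set.Ioo a b)
      (fun x hx => (key x hx).hasDerivWithinAt) (fun x _ => by simp)
      (convex_Ioo a b) hr hx₀
    rw [zero_mul] at this
    have h0 : E x₀ * ρ x₀ ^ 2 / (x₀ * B x₀ ^ 2) * (A x₀ ^ 2 / (x₀ ^ 2 * E x₀ ^ 2) - 1)
        - E r * ρ r ^ 2 / (r * B r ^ 2) * (A r ^ 2 / (r ^ 2 * E r ^ 2) - 1) = 0 := by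
      simpa [sub_eq_zero] using norm_le_zero_iff.mp this
    linarith [h0]
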